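/- In an agent-only gridworld where a vertex v of the modified state complex has link lk(v) failing to be flag, there exist two agents in the state v whose positions p, q ∈ ℤ² satisfy either {|p₁−q₁|,|p₂−q₂|} = {1,2} (a knight move) or |p₁−q₁| = |p₂−q₂| = 2 (a 2-step bishop move). -/
import Mathlib


/-- A cell of the gridworld. -/
abbrev Cell : Type := ℤ × ℤ

/-- Two cells are orthogonally adjacent if they differ by `(±1,0)` or `(0,±1)`,
i.e. their `L¹`-distance is 1. -/
def Adj (c c' : Cell) : Prop :=
  (c.1 - c'.1).natAbs + (c.2 - c'.2).natAbs = 1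

instance (c c' : Cell) : Decidable (Adj c c') := by unfold Adj; infer_instance

/-- Membership of a cell in the `n₁ × n₂` board `{0,…,n₁-1} × {0,…,n₂-1}`. -/
def InBoard (n₁ n₂ : ℤ) (c : Cell) : Prop :=
  0 ≤ c.1 ∧ c.1 < n₁ ∧ 0 ≤ c.2 ∧ c.2 < n₂

/-- A Move generator: an agent at `src` moves to the cell `tgt`. -/
structure Move where
  src : Cell
  tgt : Cell
deriving DecidableEq

/-- The support of a Move: its pair of cells. -/
def Move.sup (m : Move) : Finset Cell := {m.src, m.tgt}

/-- A Move is admissible at a state `S` (the finite set of agent positions) if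
its source is occupied and its target is an unoccupied board cell orthogonally
adjacent to the source. -/
def Move.Adm (n₁ n₂ : ℤ) (S : Finset Cell) (m : Move) : Prop :=
  m.src ∈ S ∧ m.tgt ∉ S ∧ Adj m.src m.tgt ∧ InBoard n₁ n₂ m.tgt

/-- The result of applying a Move. -/
def Move.apply (m : Move) (S : Finset Cell) : Finset Cell :=
  insert m.tgt (S.erase m.src)

/-- The `2 × 2` subgrid with bottom-left corner `a`. -/
def square (a : Cell) : Finset Cell :=
  {(a.1, a.2), (a.1 + 1, a.2), (a.1, a.2 + 1), (a.1 + 1, a.2 + 1)}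

/-- A dance of the agent at `p` on the `2 × 2` subgrid with corner `a` is
admissible at `S` if `p` is an occupied cell of the subgrid, the subgrid lies
on the board, and its other three cells are unoccupied. -/
def DanceAdm (n₁ n₂ : ℤ) (S : Finset Cell) (a p : Cell) : Prop :=
  p ∈ square a ∧ p ∈ S ∧ (∀ d ∈ square a, InBoard n₁ n₂ d) ∧
    ∀ d ∈ square a, d ≠ p → d ∉ S

/-- The two constituent Moves of the dance on `square a` which are admissible
at the current position `p` of the dancing agent. -/
def danceMoves (a p : Cell) : Finset Move :=
  ((square a).filter fun t => Adj p t).image (Move.mk p)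

/-- A finite set `M` of Moves spans a simplex in the link of the state `S` in
the modified state complex iff all its Moves are admissible at `S` and `M`
partitions into blocks which are either single Moves or the pairs of admissible
Moves of admissible dances, such that the supports of the blocks (the 2-cell
support of a single Move, the 4-cell subgrid of a dance) are pairwise
disjoint; i.e. `M` is the set of edges of a corner at `S` of a cube coming
from a commuting set of Moves and dances. -/
def SpansSimplex (n₁ n₂ : ℤ) (S : Finset Cell) (M : Finset Move) : Prop :=
  (∀ m ∈ M, m.Adm n₁ n₂ S) ∧
  ∃ (P : Finset (Finset Move)) (σ : Finset Move → Finset Cell),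
    (∀ m ∈ M, ∃! B, B ∈ P ∧ m ∈ B) ∧
    (∀ B ∈ P, B ⊆ M ∧ B.Nonempty) ∧
    (∀ B ∈ P,
      (∃ m : Move, B = {m} ∧ σ B = m.sup) ∨
      (∃ a p : Cell, DanceAdm n₁ n₂ S a p ∧ B = danceMoves a p ∧
        σ B = square a)) ∧
    (∀ B₁ ∈ P, ∀ B₂ ∈ P, B₁ ≠ B₂ → Disjoint (σ B₁) (σ B₂))

/-- The link of a state `S` in the modified state complex is a flag simplicial
complex: every finite set of admissible Moves which pairwise span 1-simplices
spans a simplex. -/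
def LinkFlag (n₁ n₂ : ℤ) (S : Finset Cell) : Prop :=
  ∀ M : Finset Move, (∀ m ∈ M, m.Adm n₁ n₂ S) →
    (∀ m₁ ∈ M, ∀ m₂ ∈ M, m₁ ≠ m₂ → SpansSimplex n₁ n₂ S {m₁, m₂}) →
    SpansSimplex n₁ n₂ S M

/-- Two agents' positions differ by a knight move. -/
def KnightRel (p q : Cell) : Prop :=
  ((p.1 - q.1).natAbs = 1 ∧ (p.2 - q.2).natAbs = 2) ∨
  ((p.1 - q.1).natAbs = 2 ∧ (p.2 - q.2).natAbs = 1)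

/-- Two agents' positions differ by a 2-step bishop move. -/
def BishopRel (p q : Cell) : Prop :=
  (p.1 - q.1).natAbs = 2 ∧ (p.2 - q.2).natAbs = 2

open Finset

lemma mem_square_iff {c a : Cell} :
    c ∈ square a ↔ (c.1 = a.1 ∨ c.1 = a.1 + 1) ∧ (c.2 = a.2 ∨ c.2 = a.2 + 1) := by
  simp only [square, Finset.mem_insert, Finset.mem_singleton, Prod.ext_iff]
  omega

lemma mem_sup_iff {c : Cell} {m : Move} : c ∈ m.sup ↔ c = m.src ∨ c = m.tgt := by
  simp [Move.sup]

lemma mem_danceMoves_iff {a p : Cell} {m : Move} :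
    m ∈ danceMoves a p ↔ m.src = p ∧ m.tgt ∈ square a ∧ Adj p m.tgt := by
  simp only [danceMoves, Finset.mem_image, Finset.mem_filter]
  constructor
  · rintro ⟨t, ⟨ht, hadj⟩, rfl⟩; exact ⟨rfl, ht, hadj⟩
  · rintro ⟨h1, h2, h3⟩; exact ⟨m.tgt, ⟨h2, h3⟩, by cases m; simp_all⟩

lemma adj_ne {p t : Cell} (h : Adj p t) : p ≠ t := by
  unfold Adj at h
  intro he; rw [he] at h; omega

lemma sup_subset_square {a p : Cell} {m : Move} (hm : m ∈ danceMoves a p)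
    (hp : p ∈ square a) : m.sup ⊆ square a := by
  rw [mem_danceMoves_iff] at hm
  intro c hc
  rw [mem_sup_iff] at hc
  rcases hc with rfl | rfl
  · rw [hm.1]; exact hp
  · exact hm.2.1

lemma coords_ne {x y : Cell} (h : ¬(x.1 = y.1 ∧ x.2 = y.2)) : x ≠ y := by
  intro he; exact h ⟨congrArg Prod.fst he, congrArg Prod.snd he⟩

lemma ne_coords {x y : Cell} (h : x ≠ y) : ¬(x.1 = y.1 ∧ x.2 = y.2) := by
  intro he; exact h (Prod.ext he.1 he.2)

lemma disj_coords {u v : Finset Cell} (hd : Disjoint u v) {x y : Cell}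
    (hx : x ∈ u) (hy : y ∈ v) : ¬(x.1 = y.1 ∧ x.2 = y.2) := by
  rintro ⟨h1, h2⟩
  have : x = y := Prod.ext h1 h2
  exact (Finset.disjoint_left.mp hd hx) (this ▸ hy)

lemma src_mem_sup (m : Move) : m.src ∈ m.sup := by simp [Move.sup]
lemma tgt_mem_sup (m : Move) : m.tgt ∈ m.sup := by simp [Move.sup]

lemma not_disjoint_self_sup (m : Move) : ¬ Disjoint m.sup m.sup := by
  intro hd
  exact (Finset.disjoint_left.mp hd (src_mem_sup m)) (src_mem_sup m)

lemma pair_span_cases {n₁ n₂ : ℤ} {S : Finset Cell} {m₁ m₂ : Move} (hne : m₁ ≠ m₂)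
    (h : SpansSimplex n₁ n₂ S {m₁, m₂}) :
    Disjoint m₁.sup m₂.sup ∨
      ∃ a p, DanceAdm n₁ n₂ S a p ∧ ({m₁, m₂} : Finset Move) = danceMoves a p := by
  obtain ⟨-, P, σ, huniq, hsub, hclass, hdisj⟩ := h
  obtain ⟨B₁, ⟨hB₁P, hmB₁⟩, hu₁⟩ := huniq m₁ (Finset.mem_insert_self _ _)
  obtain ⟨B₂, ⟨hB₂P, hmB₂⟩, hu₂⟩ := huniq m₂ (by simp)
  by_cases hBeq : B₁ = B₂
  · subst hBeq
    rcases hclass B₁ hB₁P with ⟨m, hm, -⟩ | ⟨a, p, hda, hdm, -⟩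
    · exfalso; apply hne
      rw [hm, Finset.mem_singleton] at hmB₁ hmB₂
      rw [hmB₁, hmB₂]
    · right
      refine ⟨a, p, hda, ?_⟩
      apply Finset.Subset.antisymm
      · intro x hx
        rw [← hdm]
        rcases Finset.mem_insert.mp hx with rfl | hx
        · exact hmB₁
        · rw [Finset.mem_singleton] at hx; subst hx; exact hmB₂
      · rw [← hdm]; exact (hsub B₁ hB₁P).1
  · left
    have hσ : ∀ B ∈ P, ∀ m ∈ B, m.sup ⊆ σ B := by
      intro B hBP m hmB
      rcases hclass B hBP with ⟨m', hm', hσB⟩ | ⟨a, p, hda, hdm, hσB⟩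
      · rw [hm', Finset.mem_singleton] at hmB; subst hmB; rw [hσB]
      · rw [hσB]; exact sup_subset_square (hdm ▸ hmB) hda.1
    exact Finset.disjoint_of_subset_left (hσ B₁ hB₁P m₁ hmB₁) <|
      Finset.disjoint_of_subset_right (hσ B₂ hB₂P m₂ hmB₂) (hdisj B₁ hB₁P B₂ hB₂P hBeq)
lemma move_ne_of {m₁ m₂ : Move} (hs : m₁.src = m₂.src) (hne : m₁ ≠ m₂) :
    m₁.tgt ≠ m₂.tgt := by
  intro h; apply hne; cases m₁; cases m₂; simp_all

lemma dance_square_unique {a p a' p' : Cell} (heq : danceMoves a p = danceMoves a' p')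
    (hp : p ∈ square a) (hp' : p' ∈ square a') (hc : (danceMoves a p).card = 2) :
    square a = square a' := by
  obtain ⟨m₁, m₂, hne, hset⟩ := Finset.card_eq_two.mp hc
  have h₁ : m₁ ∈ danceMoves a p := by rw [hset]; simp
  have h₂ : m₂ ∈ danceMoves a p := by rw [hset]; simp
  have h₁' : m₁ ∈ danceMoves a' p' := by rw [← heq, hset]; simp
  have h₂' : m₂ ∈ danceMoves a' p' := by rw [← heq, hset]; simp
  rw [mem_danceMoves_iff] at h₁ h₂ h₁' h₂'
  have htne : m₁.tgt ≠ m₂.tgt := move_ne_of (h₁.1.trans h₂.1.symm) hne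
  have haa : a = a' := by
    have e1 := mem_square_iff.mp h₁.2.1
    have e2 := mem_square_iff.mp h₂.2.1
    have e1' := mem_square_iff.mp h₁'.2.1
    have e2' := mem_square_iff.mp h₂'.2.1
    have ep := mem_square_iff.mp hp
    have a1 := h₁.2.2
    have a2 := h₂.2.2
    unfold Adj at a1 a2
    have htne' := ne_coords htne
    clear heq hset hc hp hp' hne h₁ h₂ h₁' h₂' htne
    have hd : m₁.tgt.1 ≠ m₂.tgt.1 ∧ m₁.tgt.2 ≠ m₂.tgt.2 := by omega
    clear a1 a2 htne' ep
    have g1 : a.1 + a.1 + 1 = m₁.tgt.1 + m₂.tgt.1 ∧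
        a.2 + a.2 + 1 = m₁.tgt.2 + m₂.tgt.2 := by omega
    have g2 : a'.1 + a'.1 + 1 = m₁.tgt.1 + m₂.tgt.1 ∧
        a'.2 + a'.2 + 1 = m₁.tgt.2 + m₂.tgt.2 := by omega
    have key : a.1 = a'.1 ∧ a.2 = a'.2 := by omega
    exact Prod.ext key.1 key.2
  rw [haa]
lemma square_bound {a c d : Cell} (hc : c ∈ square a) (hd : d ∈ square a) :
    -1 ≤ c.1 - d.1 ∧ c.1 - d.1 ≤ 1 ∧ -1 ≤ c.2 - d.2 ∧ c.2 - d.2 ≤ 1 := by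
  rw [mem_square_iff] at hc hd; omega

lemma adj_split {p t : Cell} (h : Adj p t) :
    (t.1 = p.1 ∧ (t.2 = p.2 + 1 ∨ t.2 = p.2 - 1)) ∨
    (t.2 = p.2 ∧ (t.1 = p.1 + 1 ∨ t.1 = p.1 - 1)) := by
  unfold Adj at h; omega

/-- If `p, t1, t2, c` are the four (distinct) cells of a 2×2 square,
`t1, t2` adjacent to `p`, then `c` is the corner diagonally opposite `p`
and `t1, t2` are the two mixed corners. -/
lemma fourth_corner {p t1 t2 c : Cell}
    (b1 : -1 ≤ t1.1 - p.1 ∧ t1.1 - p.1 ≤ 1 ∧ -1 ≤ t1.2 - p.2 ∧ t1.2 - p.2 ≤ 1)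
    (b2 : -1 ≤ t2.1 - p.1 ∧ t2.1 - p.1 ≤ 1 ∧ -1 ≤ t2.2 - p.2 ∧ t2.2 - p.2 ≤ 1)
    (b3 : -1 ≤ c.1 - p.1 ∧ c.1 - p.1 ≤ 1 ∧ -1 ≤ c.2 - p.2 ∧ c.2 - p.2 ≤ 1)
    (b4 : -1 ≤ t1.1 - t2.1 ∧ t1.1 - t2.1 ≤ 1 ∧ -1 ≤ t1.2 - t2.2 ∧ t1.2 - t2.2 ≤ 1)
    (b5 : -1 ≤ c.1 - t1.1 ∧ c.1 - t1.1 ≤ 1 ∧ -1 ≤ c.2 - t1.2 ∧ c.2 - t1.2 ≤ 1)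
    (b6 : -1 ≤ c.1 - t2.1 ∧ c.1 - t2.1 ≤ 1 ∧ -1 ≤ c.2 - t2.2 ∧ c.2 - t2.2 ≤ 1)
    (a1 : Adj p t1) (a2 : Adj p t2)
    (hne : ¬(t1.1 = t2.1 ∧ t1.2 = t2.2))
    (hcp : ¬(c.1 = p.1 ∧ c.2 = p.2))
    (hc1 : ¬(c.1 = t1.1 ∧ c.2 = t1.2))
    (hc2 : ¬(c.1 = t2.1 ∧ c.2 = t2.2)) :
    ((t1.1 = p.1 ∧ t1.2 = c.2) ∨ (t1.1 = c.1 ∧ t1.2 = p.2)) ∧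
    ((t2.1 = p.1 ∧ t2.2 = c.2) ∨ (t2.1 = c.1 ∧ t2.2 = p.2)) ∧
    (c.1 - p.1).natAbs = 1 ∧ (c.2 - p.2).natAbs = 1 := by
  have A1 := adj_split a1
  have A2 := adj_split a2
  clear a1 a2 b1 b2
  rcases A1 with ⟨e1, f1 | f1⟩ | ⟨e1, f1 | f1⟩ <;>
    rcases A2 with ⟨e2, f2 | f2⟩ | ⟨e2, f2 | f2⟩ <;>
    omega
lemma natAbs_one_split {x y : ℤ} (h : (x - y).natAbs = 1) : x = y + 1 ∨ x = y - 1 := by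
  omega

lemma knight_step {p t1 t2 c s : Cell}
    (f1 : (t1.1 = p.1 ∧ t1.2 = c.2) ∨ (t1.1 = c.1 ∧ t1.2 = p.2))
    (f2 : (t2.1 = p.1 ∧ t2.2 = c.2) ∨ (t2.1 = c.1 ∧ t2.2 = p.2))
    (fd : (c.1 - p.1).natAbs = 1 ∧ (c.2 - p.2).natAbs = 1)
    (asc : Adj s c)
    (hsp : ¬(s.1 = p.1 ∧ s.2 = p.2))
    (hs1 : ¬(s.1 = t1.1 ∧ s.2 = t1.2))
    (hs2 : ¬(s.1 = t2.1 ∧ s.2 = t2.2))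
    (hne : ¬(t1.1 = t2.1 ∧ t1.2 = t2.2)) :
    KnightRel s p := by
  unfold KnightRel
  have FD1 := natAbs_one_split fd.1
  have FD2 := natAbs_one_split fd.2
  have AS := adj_split asc
  clear fd asc
  rcases f1 with ⟨u1, v1⟩ | ⟨u1, v1⟩ <;> rcases f2 with ⟨u2, v2⟩ | ⟨u2, v2⟩ <;>
    rcases FD1 with g1 | g1 <;> rcases FD2 with g2 | g2 <;>
    rcases AS with ⟨e, f | f⟩ | ⟨e, f | f⟩ <;>
    omega

set_option maxHeartbeats 8000000 in
lemma bishop_step {p t1 t2 p' t1' t2' c : Cell}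
    (f1 : (t1.1 = p.1 ∧ t1.2 = c.2) ∨ (t1.1 = c.1 ∧ t1.2 = p.2))
    (f2 : (t2.1 = p.1 ∧ t2.2 = c.2) ∨ (t2.1 = c.1 ∧ t2.2 = p.2))
    (fd : (c.1 - p.1).natAbs = 1 ∧ (c.2 - p.2).natAbs = 1)
    (f1' : (t1'.1 = p'.1 ∧ t1'.2 = c.2) ∨ (t1'.1 = c.1 ∧ t1'.2 = p'.2))
    (f2' : (t2'.1 = p'.1 ∧ t2'.2 = c.2) ∨ (t2'.1 = c.1 ∧ t2'.2 = p'.2))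
    (fd' : (c.1 - p'.1).natAbs = 1 ∧ (c.2 - p'.2).natAbs = 1)
    (hpp : ¬(p.1 = p'.1 ∧ p.2 = p'.2))
    (h11 : ¬(t1.1 = t1'.1 ∧ t1.2 = t1'.2))
    (h12 : ¬(t1.1 = t2'.1 ∧ t1.2 = t2'.2))
    (h21 : ¬(t2.1 = t1'.1 ∧ t2.2 = t1'.2))
    (h22 : ¬(t2.1 = t2'.1 ∧ t2.2 = t2'.2))
    (hne : ¬(t1.1 = t2.1 ∧ t1.2 = t2.2))
    (hne' : ¬(t1'.1 = t2'.1 ∧ t1'.2 = t2'.2)) :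
    BishopRel p p' := by
  unfold BishopRel
  have FD1 := natAbs_one_split fd.1
  have FD2 := natAbs_one_split fd.2
  have FD1' := natAbs_one_split fd'.1
  have FD2' := natAbs_one_split fd'.2
  clear fd fd'
  rcases f1 with ⟨u1, v1⟩ | ⟨u1, v1⟩ <;> rcases f2 with ⟨u2, v2⟩ | ⟨u2, v2⟩ <;>
    rcases f1' with ⟨u3, v3⟩ | ⟨u3, v3⟩ <;> rcases f2' with ⟨u4, v4⟩ | ⟨u4, v4⟩ <;>
    rcases FD1 with g1 | g1 <;> rcases FD2 with g2 | g2 <;>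
    rcases FD1' with g3 | g3 <;> rcases FD2' with g4 | g4 <;>
    omega

lemma three_partners_false {p t t1 t2 : Cell}
    (bt1 : -1 ≤ t.1 - t1.1 ∧ t.1 - t1.1 ≤ 1 ∧ -1 ≤ t.2 - t1.2 ∧ t.2 - t1.2 ≤ 1)
    (bt2 : -1 ≤ t.1 - t2.1 ∧ t.1 - t2.1 ≤ 1 ∧ -1 ≤ t.2 - t2.2 ∧ t.2 - t2.2 ≤ 1)
    (b12 : -1 ≤ t1.1 - t2.1 ∧ t1.1 - t2.1 ≤ 1 ∧ -1 ≤ t1.2 - t2.2 ∧ t1.2 - t2.2 ≤ 1)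
    (a0 : Adj p t) (a1 : Adj p t1) (a2 : Adj p t2)
    (h01 : ¬(t.1 = t1.1 ∧ t.2 = t1.2))
    (h02 : ¬(t.1 = t2.1 ∧ t.2 = t2.2))
    (h12 : ¬(t1.1 = t2.1 ∧ t1.2 = t2.2)) : False := by
  have A0 := adj_split a0
  have A1 := adj_split a1
  have A2 := adj_split a2
  clear a0 a1 a2
  rcases A0 with ⟨e0, f0 | f0⟩ | ⟨e0, f0 | f0⟩ <;>
    rcases A1 with ⟨e1, f1 | f1⟩ | ⟨e1, f1 | f1⟩ <;>
    rcases A2 with ⟨e2, f2 | f2⟩ | ⟨e2, f2 | f2⟩ <;>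
    omega
/-- Single move vs. dance: if a move `u` has support disjoint from the supports
of both moves of an admissible dance, and no two agents are knight/bishop
related, then its support is disjoint from the whole dance square. -/
lemma single_dance_disjoint {n₁ n₂ : ℤ} {S : Finset Cell}
    (h : ∀ p ∈ S, ∀ q ∈ S, p ≠ q → ¬(KnightRel p q ∨ BishopRel p q))
    {u : Move} (hu : u.Adm n₁ n₂ S) {a p : Cell} {m m' : Move}
    (hda : DanceAdm n₁ n₂ S a p)
    (hdm : ({m, m'} : Finset Move) = danceMoves a p) (hmm : m ≠ m')
    (hd1 : Disjoint u.sup m.sup) (hd2 : Disjoint u.sup m'.sup) :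
    Disjoint u.sup (square a) := by
  rw [Finset.disjoint_left]
  intro cc hcu hca
  have hm : m ∈ danceMoves a p := by rw [← hdm]; simp
  have hm' : m' ∈ danceMoves a p := by rw [← hdm]; simp
  rw [mem_danceMoves_iff] at hm hm'
  obtain ⟨hs1, ht1, ha1⟩ := hm
  obtain ⟨hs2, ht2, ha2⟩ := hm'
  have htne : m.tgt ≠ m'.tgt := move_ne_of (hs1.trans hs2.symm) hmm
  have hp : p ∈ square a := hda.1
  have pmem : p ∈ m.sup := by rw [mem_sup_iff]; left; exact hs1.symm
  have pmem' : p ∈ m'.sup := by rw [mem_sup_iff]; left; exact hs2.symm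
  have hccp : cc ≠ p := coords_ne (disj_coords hd1 hcu pmem)
  have hccS : cc ∉ S := hda.2.2.2 cc hca hccp
  have hcct : cc = u.tgt := by
    rcases mem_sup_iff.mp hcu with hh | hh
    · exact absurd (hh ▸ hu.1) hccS
    · exact hh
  have f := fourth_corner (square_bound ht1 hp) (square_bound ht2 hp)
    (square_bound hca hp) (square_bound ht1 ht2) (square_bound hca ht1)
    (square_bound hca ht2) ha1 ha2 (ne_coords htne)
    (disj_coords hd1 hcu pmem)
    (disj_coords hd1 hcu (tgt_mem_sup m))
    (disj_coords hd2 hcu (tgt_mem_sup m'))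
  have hasc : Adj u.src cc := hcct ▸ hu.2.2.1
  have hk : KnightRel u.src p :=
    knight_step f.1 f.2.1 f.2.2 hasc
      (disj_coords hd1 (src_mem_sup u) pmem)
      (disj_coords hd1 (src_mem_sup u) (tgt_mem_sup m))
      (disj_coords hd2 (src_mem_sup u) (tgt_mem_sup m'))
      (ne_coords htne)
  exact h u.src hu.1 p hda.2.1
    (coords_ne (disj_coords hd1 (src_mem_sup u) pmem)) (Or.inl hk)

/-- Dance vs. dance: the two squares are disjoint. -/
lemma dance_dance_disjoint {n₁ n₂ : ℤ} {S : Finset Cell}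
    (h : ∀ p ∈ S, ∀ q ∈ S, p ≠ q → ¬(KnightRel p q ∨ BishopRel p q))
    {a p : Cell} {m m' : Move} (hda : DanceAdm n₁ n₂ S a p)
    (hdm : ({m, m'} : Finset Move) = danceMoves a p) (hmm : m ≠ m')
    (hadm : m.Adm n₁ n₂ S) (hadm' : m'.Adm n₁ n₂ S)
    {a' p' : Cell} {w w' : Move} (hda' : DanceAdm n₁ n₂ S a' p')
    (hdw : ({w, w'} : Finset Move) = danceMoves a' p') (hww : w ≠ w')
    (hadw : w.Adm n₁ n₂ S) (hadw' : w'.Adm n₁ n₂ S)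
    (d11 : Disjoint m.sup w.sup) (d12 : Disjoint m.sup w'.sup)
    (d21 : Disjoint m'.sup w.sup) (d22 : Disjoint m'.sup w'.sup) :
    Disjoint (square a) (square a') := by
  rw [Finset.disjoint_left]
  intro cc hca hca'
  have hm : m ∈ danceMoves a p := by rw [← hdm]; simp
  have hm' : m' ∈ danceMoves a p := by rw [← hdm]; simp
  rw [mem_danceMoves_iff] at hm hm'
  obtain ⟨hs1, ht1, ha1⟩ := hm
  obtain ⟨hs2, ht2, ha2⟩ := hm'
  have hw : w ∈ danceMoves a' p' := by rw [← hdw]; simp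
  have hw' : w' ∈ danceMoves a' p' := by rw [← hdw]; simp
  rw [mem_danceMoves_iff] at hw hw'
  obtain ⟨hs1', ht1', ha1'⟩ := hw
  obtain ⟨hs2', ht2', ha2'⟩ := hw'
  have htne : m.tgt ≠ m'.tgt := move_ne_of (hs1.trans hs2.symm) hmm
  have htne' : w.tgt ≠ w'.tgt := move_ne_of (hs1'.trans hs2'.symm) hww
  have hp : p ∈ square a := hda.1
  have hp' : p' ∈ square a' := hda'.1
  have pmem : p ∈ m.sup := by rw [mem_sup_iff]; left; exact hs1.symm
  have pmem2 : p ∈ m'.sup := by rw [mem_sup_iff]; left; exact hs2.symm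
  have pmem' : p' ∈ w.sup := by rw [mem_sup_iff]; left; exact hs1'.symm
  have pmem2' : p' ∈ w'.sup := by rw [mem_sup_iff]; left; exact hs2'.symm
  -- cc is not an occupied cell of either square except possibly the dancers
  have hppne : p ≠ p' := coords_ne (disj_coords d11 pmem pmem')
  by_cases hcp : cc = p
  · exact (hda'.2.2.2 cc hca' (hcp ▸ hppne)) (hcp ▸ hda.2.1)
  by_cases hcp' : cc = p'
  · exact (hda.2.2.2 cc hca (hcp' ▸ hppne.symm)) (hcp' ▸ hda'.2.1)
  -- if cc is a target of the first dance, use the single/dance lemma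
  by_cases hct1 : cc = m.tgt
  · have := single_dance_disjoint h hadm hda' hdw hww d11 d12
    exact (Finset.disjoint_left.mp this (hct1 ▸ tgt_mem_sup m)) hca'
  by_cases hct2 : cc = m'.tgt
  · have := single_dance_disjoint h hadm' hda' hdw hww d21 d22
    exact (Finset.disjoint_left.mp this (hct2 ▸ tgt_mem_sup m')) hca'
  by_cases hcw1 : cc = w.tgt
  · have := single_dance_disjoint h hadw hda hdm hmm d11.symm d21.symm
    exact (Finset.disjoint_left.mp this (hcw1 ▸ tgt_mem_sup w)) hca
  by_cases hcw2 : cc = w'.tgt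
  · have := single_dance_disjoint h hadw' hda hdm hmm d12.symm d22.symm
    exact (Finset.disjoint_left.mp this (hcw2 ▸ tgt_mem_sup w')) hca
  -- otherwise cc is the fourth corner of both squares: bishop contradiction
  have f := fourth_corner (square_bound ht1 hp) (square_bound ht2 hp)
    (square_bound hca hp) (square_bound ht1 ht2) (square_bound hca ht1)
    (square_bound hca ht2) ha1 ha2 (ne_coords htne)
    (ne_coords hcp) (ne_coords hct1) (ne_coords hct2)
  have f' := fourth_corner (square_bound ht1' hp') (square_bound ht2' hp')
    (square_bound hca' hp') (square_bound ht1' ht2') (square_bound hca' ht1')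
    (square_bound hca' ht2') ha1' ha2' (ne_coords htne')
    (ne_coords hcp') (ne_coords hcw1) (ne_coords hcw2)
  have hb : BishopRel p p' :=
    bishop_step f.1 f.2.1 f.2.2 f'.1 f'.2.1 f'.2.2
      (disj_coords d11 pmem pmem')
      (disj_coords d11 (tgt_mem_sup m) (tgt_mem_sup w))
      (disj_coords d12 (tgt_mem_sup m) (tgt_mem_sup w'))
      (disj_coords d21 (tgt_mem_sup m') (tgt_mem_sup w))
      (disj_coords d22 (tgt_mem_sup m') (tgt_mem_sup w'))
      (ne_coords htne) (ne_coords htne')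
  exact h p hda.2.1 p' hda'.2.1 hppne (Or.inr hb)
lemma flag_of_no_rel {n₁ n₂ : ℤ} {S : Finset Cell}
    (h : ∀ p ∈ S, ∀ q ∈ S, p ≠ q → ¬(KnightRel p q ∨ BishopRel p q)) :
    LinkFlag n₁ n₂ S := by
  intro M hadm hpair
  classical
  refine ⟨hadm, ?_⟩
  -- every overlapping admissible pair is a dance pair
  have danceOf : ∀ m ∈ M, ∀ m' ∈ M, m ≠ m' → ¬Disjoint m.sup m'.sup →
      ∃ a, DanceAdm n₁ n₂ S a m.src ∧
        ({m, m'} : Finset Move) = danceMoves a m.src := by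
    intro m hm m' hm' hne hnd
    rcases pair_span_cases hne (hpair m hm m' hm' hne) with hd | ⟨a, p, hda, hdm⟩
    · exact absurd hd hnd
    · have hmd : m ∈ danceMoves a p := by rw [← hdm]; simp
      have hsrc : m.src = p := (mem_danceMoves_iff.mp hmd).1
      exact ⟨a, by rw [hsrc]; exact hda, by rw [hsrc]; exact hdm⟩
  -- each move has at most one overlapping partner in M
  have partner_unique : ∀ m ∈ M, ∀ m₁ ∈ M, ∀ m₂ ∈ M, m₁ ≠ m → m₂ ≠ m →
      ¬Disjoint m.sup m₁.sup → ¬Disjoint m.sup m₂.sup → m₁ = m₂ := by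
    intro m hm m₁ hm₁ m₂ hm₂ h1 h2 hd1 hd2
    by_contra hne12
    obtain ⟨a1, hda1, hdm1⟩ := danceOf m hm m₁ hm₁ (Ne.symm h1) hd1
    obtain ⟨a2, hda2, hdm2⟩ := danceOf m hm m₂ hm₂ (Ne.symm h2) hd2
    have hm1d : m₁ ∈ danceMoves a1 m.src := by rw [← hdm1]; simp
    have hm2d : m₂ ∈ danceMoves a2 m.src := by rw [← hdm2]; simp
    have hmd1 : m ∈ danceMoves a1 m.src := by rw [← hdm1]; simp
    have hmd2 : m ∈ danceMoves a2 m.src := by rw [← hdm2]; simp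
    rw [mem_danceMoves_iff] at hm1d hm2d hmd1 hmd2
    have hs1 : m₁.src = m.src := hm1d.1
    have hnd12 : ¬Disjoint m₁.sup m₂.sup := by
      rw [Finset.not_disjoint_iff]
      exact ⟨m.src, by rw [← hs1]; exact src_mem_sup m₁,
        by rw [← hm2d.1]; exact src_mem_sup m₂⟩
    obtain ⟨a3, hda3, hdm3⟩ := danceOf m₁ hm₁ m₂ hm₂ hne12 hnd12
    have hm1d3 : m₁ ∈ danceMoves a3 m₁.src := by rw [← hdm3]; simp
    have hm2d3 : m₂ ∈ danceMoves a3 m₁.src := by rw [← hdm3]; simp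
    rw [mem_danceMoves_iff] at hm1d3 hm2d3
    -- three distinct targets adjacent to the common source: impossible
    have htne1 : m.tgt ≠ m₁.tgt := move_ne_of hs1.symm (Ne.symm h1)
    have htne2 : m.tgt ≠ m₂.tgt := move_ne_of hm2d.1.symm (Ne.symm h2)
    have htne12 : m₁.tgt ≠ m₂.tgt := move_ne_of (hs1.trans hm2d.1.symm) hne12
    exact three_partners_false
      (square_bound hmd1.2.1 hm1d.2.1) (square_bound hmd2.2.1 hm2d.2.1)
      (square_bound hm1d3.2.1 hm2d3.2.1)
      hmd1.2.2 hm1d.2.2 hm2d.2.2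
      (ne_coords htne1) (ne_coords htne2) (ne_coords htne12)
  -- the blocks
  set Blk : Move → Finset Move :=
    fun m => M.filter fun m' => ¬Disjoint m.sup m'.sup with hBlk
  have self_mem : ∀ m ∈ M, m ∈ Blk m := by
    intro m hm
    rw [hBlk, Finset.mem_filter]
    exact ⟨hm, not_disjoint_self_sup m⟩
  have blk_cases : ∀ m ∈ M, Blk m = {m} ∨
      ∃ m' ∈ M, m' ≠ m ∧ ¬Disjoint m.sup m'.sup ∧ Blk m = {m, m'} := by
    intro m hm
    by_cases hex : ∃ m' ∈ M, m' ≠ m ∧ ¬Disjoint m.sup m'.sup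
    · obtain ⟨m', hm', hne, hnd⟩ := hex
      right
      refine ⟨m', hm', hne, hnd, ?_⟩
      ext x
      rw [hBlk]
      simp only [Finset.mem_filter, Finset.mem_insert, Finset.mem_singleton]
      constructor
      · rintro ⟨hx, hdx⟩
        by_cases hxm : x = m
        · exact Or.inl hxm
        · exact Or.inr (partner_unique m hm x hx m' hm' hxm hne hdx hnd)
      · rintro (hh | hh)
        · subst hh; exact ⟨hm, not_disjoint_self_sup _⟩
        · subst hh; exact ⟨hm', hnd⟩
    · left
      ext x
      rw [hBlk]
      simp only [Finset.mem_filter, Finset.mem_singleton]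
      constructor
      · rintro ⟨hx, hdx⟩
        by_contra hxm
        exact hex ⟨x, hx, hxm, hdx⟩
      · intro hh
        subst hh; exact ⟨hm, not_disjoint_self_sup _⟩
  have blk_mem_iff : ∀ m x, x ∈ Blk m ↔ x ∈ M ∧ ¬Disjoint m.sup x.sup := by
    intro m x; rw [hBlk]; simp [Finset.mem_filter]
  have blk_eq : ∀ m ∈ M, ∀ x, x ∈ Blk m → Blk x = Blk m := by
    intro m hm x hx
    obtain ⟨hxM, hdx⟩ := (blk_mem_iff m x).mp hx
    by_cases hxm : x = m
    · rw [hxm]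
    · have h1 : Blk m = {m, x} := by
        rcases blk_cases m hm with hB | ⟨m', hm', hne', hnd', hB⟩
        · exfalso; rw [hB, Finset.mem_singleton] at hx; exact hxm hx
        · rw [hB] at hx
          rcases Finset.mem_insert.mp hx with rfl | hx2
          · exact absurd rfl hxm
          · rw [Finset.mem_singleton] at hx2; rw [hB, hx2]
      have hmBx : m ∈ Blk x := (blk_mem_iff x m).mpr
        ⟨hm, fun hd => ((blk_mem_iff m x).mp hx).2 hd.symm⟩
      have h2 : Blk x = {x, m} := by
        rcases blk_cases x hxM with hB | ⟨m', hm', hne', hnd', hB⟩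
        · exfalso; rw [hB, Finset.mem_singleton] at hmBx
          exact hxm hmBx.symm
        · rw [hB] at hmBx
          rcases Finset.mem_insert.mp hmBx with rfl | hx2
          · exact absurd rfl (Ne.symm hxm)
          · rw [Finset.mem_singleton] at hx2; rw [hB, hx2]
      rw [h1, h2]
      ext y; simp only [Finset.mem_insert, Finset.mem_singleton]; tauto
  set P : Finset (Finset Move) := M.image Blk with hP
  set σ : Finset Move → Finset Cell := fun B =>
    if hB : ∃ a p, B = danceMoves a p ∧ p ∈ square a ∧ B.card = 2
    then square hB.choose else B.biUnion Move.sup with hσ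
  have σ_single : ∀ m : Move, σ {m} = m.sup := by
    intro m
    rw [hσ]
    dsimp only
    rw [dif_neg, Finset.singleton_biUnion]
    rintro ⟨a, p, hBeq, hp, hcard⟩
    simp at hcard
  have σ_dance : ∀ a p, p ∈ square a → (danceMoves a p).card = 2 →
      σ (danceMoves a p) = square a := by
    intro a p hp hc
    have hex : ∃ a' p', danceMoves a p = danceMoves a' p' ∧ p' ∈ square a' ∧
        (danceMoves a p).card = 2 := ⟨a, p, rfl, hp, hc⟩
    rw [hσ]
    dsimp only
    rw [dif_pos hex]
    obtain ⟨p', heq', hp', hc'⟩ := hex.choose_spec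
    exact (dance_square_unique heq' hp hp' hc).symm
  have classify : ∀ B ∈ P, (∃ m ∈ M, B = {m} ∧ σ B = m.sup) ∨
      (∃ a p, ∃ m ∈ M, ∃ m' ∈ M, m ≠ m' ∧ DanceAdm n₁ n₂ S a p ∧
        B = {m, m'} ∧ ({m, m'} : Finset Move) = danceMoves a p ∧
        σ B = square a) := by
    intro B hB
    obtain ⟨m, hm, rfl⟩ := Finset.mem_image.mp hB
    rcases blk_cases m hm with hBm | ⟨m', hm', hne', hnd', hBm⟩
    · left
      exact ⟨m, hm, hBm, by rw [hBm]; exact σ_single m⟩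
    · right
      obtain ⟨a, hda, hdm⟩ := danceOf m hm m' hm' (Ne.symm hne') hnd'
      have hcard : (danceMoves a m.src).card = 2 := by
        rw [← hdm]; exact Finset.card_pair (Ne.symm hne')
      refine ⟨a, m.src, m, hm, m', hm', Ne.symm hne', hda, hBm, hdm, ?_⟩
      rw [hBm, hdm]
      exact σ_dance a m.src hda.1 hcard
  refine ⟨P, σ, ?_, ?_, ?_, ?_⟩
  · -- unique block containing each move
    intro m hm
    refine ⟨Blk m, ⟨Finset.mem_image_of_mem Blk hm, self_mem m hm⟩, ?_⟩
    rintro B ⟨hBP, hmB⟩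
    obtain ⟨x, hx, rfl⟩ := Finset.mem_image.mp hBP
    exact (blk_eq x hx m hmB).symm ▸ (blk_eq x hx m hmB ▸ rfl)
  · -- blocks are nonempty subsets of M
    intro B hB
    obtain ⟨m, hm, rfl⟩ := Finset.mem_image.mp hB
    exact ⟨by rw [hBlk]; exact Finset.filter_subset _ _, ⟨m, self_mem m hm⟩⟩
  · -- classification
    intro B hB
    rcases classify B hB with ⟨m, _, h1, h2⟩ | ⟨a, p, m, _, m', _, _, hda, h1, h2, h3⟩
    · exact Or.inl ⟨m, h1, h2⟩
    · exact Or.inr ⟨a, p, hda, by rw [h1, h2], h3⟩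
  · -- supports of distinct blocks are disjoint
    intro B₁ hB₁ B₂ hB₂ hBne
    have cross : ∀ u ∈ B₁, ∀ v ∈ B₂, Disjoint u.sup v.sup := by
      obtain ⟨x, hx, rfl⟩ := Finset.mem_image.mp hB₁
      obtain ⟨y, hy, rfl⟩ := Finset.mem_image.mp hB₂
      intro u hu v hv
      by_contra hnd
      have huM : u ∈ M := ((blk_mem_iff x u).mp hu).1
      have hvM : v ∈ M := ((blk_mem_iff y v).mp hv).1
      have hvBu : v ∈ Blk u := (blk_mem_iff u v).mpr ⟨hvM, hnd⟩
      apply hBne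
      rw [← blk_eq x hx u hu, ← blk_eq y hy v hv, blk_eq u huM v hvBu]
    rcases classify B₁ hB₁ with ⟨m, hmM, e1, s1⟩ |
        ⟨a, p, m, hmM, m', hm'M, hne, hda, e1, edm, s1⟩ <;>
      rcases classify B₂ hB₂ with ⟨w, hwM, e2, s2⟩ |
        ⟨a', p', w, hwM, w', hw'M, hne', hda', e2, edw, s2⟩
    · rw [s1, s2]
      exact cross m (by rw [e1]; simp) w (by rw [e2]; simp)
    · rw [s1, s2]
      exact single_dance_disjoint h (hadm m hmM) hda' edw hne'
        (cross m (by rw [e1]; simp) w (by rw [e2]; simp))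
        (cross m (by rw [e1]; simp) w' (by rw [e2]; simp))
    · rw [s1, s2]
      exact (single_dance_disjoint h (hadm w hwM) hda edm hne
        (cross m (by rw [e1]; simp) w (by rw [e2]; simp)).symm
        (cross m' (by rw [e1]; simp) w (by rw [e2]; simp)).symm).symm
    · rw [s1, s2]
      exact dance_dance_disjoint h hda edm hne (hadm m hmM) (hadm m' hm'M)
        hda' edw hne' (hadm w hwM) (hadm w' hw'M)
        (cross m (by rw [e1]; simp) w (by rw [e2]; simp))
        (cross m (by rw [e1]; simp) w' (by rw [e2]; simp))
        (cross m' (by rw [e1]; simp) w (by rw [e2]; simp))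
        (cross m' (by rw [e1]; simp) w' (by rw [e2]; simp))

/-- if the link of a state `v` of the modified state complex of
an agent-only gridworld fails to be flag, then two of the agents of `v` are
separated by a knight move or a 2-step bishop move. -/
theorem link_failure_knight_or_bishop (n₁ n₂ : ℤ) (S : Finset Cell)
    (hS : ∀ c ∈ S, InBoard n₁ n₂ c) (hfail : ¬ LinkFlag n₁ n₂ S) :
    ∃ p ∈ S, ∃ q ∈ S, p ≠ q ∧ (KnightRel p q ∨ BishopRel p q) := by
  by_contra hcon
  apply hfail
  apply flag_of_no_rel
  intro p hp q hq hne hrel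
  exact hcon ⟨p, hp, q, hq, hne, hrel⟩
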